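/- Let Θ be a topologically reasonable family of subsets of ω^ω. If every set in Θ has the Baire property, then every set in Θ is Miller measurable. -/

import Mathlib

/-- `T` is a tree of finite sequences of natural numbers: closed under initial segments. -/
def IsTreeN (T : Set (List ℕ)) : Prop :=
  ∀ t ∈ T, ∀ k : ℕ, t.take k ∈ T

/-- The set of immediate successors of `t` in `T`. -/
def succs (T : Set (List ℕ)) (t : List ℕ) : Set ℕ :=
  { k | t ++ [k] ∈ T }

/-- `t` is a splitting node of `T`: it lies in `T` and has at least two
immediate successors in `T`. -/
def SplitNodeN (T : Set (List ℕ)) (t : List ℕ) : Prop :=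
  t ∈ T ∧ ∃ k l : ℕ, k ≠ l ∧ k ∈ succs T t ∧ l ∈ succs T t

/-- `T` is a Miller (superperfect) tree: a nonempty tree in which every node
extends to a splitting node, and every splitting node has infinitely many
immediate successors. -/
def IsMiller (T : Set (List ℕ)) : Prop :=
  IsTreeN T ∧ T.Nonempty ∧ (∀ t ∈ T, ∃ s, t <+: s ∧ SplitNodeN T s) ∧
  (∀ t : List ℕ, SplitNodeN T t → (succs T t).Infinite)

/-- The body `[T]` of a tree: all infinite branches whose finite initial
segments all lie in `T`. -/
def bodyN (T : Set (List ℕ)) : Set (ℕ → ℕ) :=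
  { x | ∀ n : ℕ, (List.ofFn fun i : Fin n => x i) ∈ T }

/-- `X ⊆ ω^ω` is Miller measurable: inside every Miller tree there is a Miller
subtree whose body is contained in `X` or disjoint from `X`. -/
def MillerMeasurable (X : Set (ℕ → ℕ)) : Prop :=
  ∀ T : Set (List ℕ), IsMiller T →
    ∃ T' : Set (List ℕ), IsMiller T' ∧ T' ⊆ T ∧ (bodyN T' ⊆ X ∨ bodyN T' ∩ X = ∅)

/-- A family of subsets of Baire space is topologically reasonable if it is closed
under continuous preimages and under intersections with closed sets. -/
def TopReasonableN (Θ : Set (Set (ℕ → ℕ))) : Prop :=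
  (∀ X ∈ Θ, ∀ f : (ℕ → ℕ) → (ℕ → ℕ), Continuous f → f ⁻¹' X ∈ Θ) ∧
  (∀ X ∈ Θ, ∀ C : Set (ℕ → ℕ), IsClosed C → X ∩ C ∈ Θ)

/-- `X` has the Baire property: it differs from an open set by a meager set. -/
def HasBairePropN (X : Set (ℕ → ℕ)) : Prop :=
  ∃ U : Set (ℕ → ℕ), IsOpen U ∧ IsMeagre (symmDiff X U)



def seg (x : ℕ → ℕ) (n : ℕ) : List ℕ := List.ofFn fun i : Fin n => x i

@[simp] lemma seg_length (x : ℕ → ℕ) (n : ℕ) : (seg x n).length = n := by simp [seg]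

lemma seg_getElem (x : ℕ → ℕ) {n i : ℕ} (h : i < n) :
    (seg x n)[i]'(by simpa using h) = x i := by simp [seg]

lemma seg_take (x : ℕ → ℕ) {n m : ℕ} (h : n ≤ m) : (seg x m).take n = seg x n := by
  apply List.ext_getElem
  · simp; omega
  · intro i h1 h2
    simp only [List.getElem_take]
    rw [seg_getElem, seg_getElem] <;> simp at h1 h2 <;> omega

lemma seg_prefix (x : ℕ → ℕ) {n m : ℕ} (h : n ≤ m) : seg x n <+: seg x m := by
  rw [← seg_take x h]; exact List.take_prefix _ _

lemma seg_snoc (x : ℕ → ℕ) (n : ℕ) : seg x (n + 1) = seg x n ++ [x n] := by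
  apply List.ext_getElem
  · simp
  · intro i h1 h2
    simp only [seg_length] at h1
    rcases Nat.lt_or_ge i n with h | h
    · rw [seg_getElem x h1, List.getElem_append_left (by simpa using h), seg_getElem x h]
    · have : i = n := by omega
      subst this
      rw [seg_getElem x h1]
      simp [List.getElem_append_right]

def cylF (t : List ℕ) : Set (ℕ → ℕ) := {x | seg x t.length = t}

lemma mem_cylF_iff {t : List ℕ} {x : ℕ → ℕ} :
    x ∈ cylF t ↔ ∀ i : ℕ, ∀ h : i < t.length, x i = t[i] := by
  constructor
  · intro hx i h
    rw [← seg_getElem x (n := t.length) h]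
    simp only [cylF, Set.mem_setOf_eq] at hx
    exact List.getElem_of_eq hx _
  · intro h
    show seg x t.length = t
    apply List.ext_getElem (by simp)
    intro i h1 h2
    rw [seg_getElem x (by simpa using h1)]
    exact h i h2

lemma cylF_anti {s t : List ℕ} (h : s <+: t) : cylF t ⊆ cylF s := by
  intro x hx
  rw [mem_cylF_iff] at hx ⊢
  intro i hi
  rw [hx i (hi.trans_le h.length_le), h.getElem hi]

lemma mem_cylF_seg (x : ℕ → ℕ) (n : ℕ) : x ∈ cylF (seg x n) := by
  rw [mem_cylF_iff]
  intro i hi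
  rw [seg_getElem x (by simpa using hi)]

lemma isOpen_cylF (t : List ℕ) : IsOpen (cylF t) := by
  have : cylF t = ⋂ i : Fin t.length, {x : ℕ → ℕ | x i = t[i]} := by
    ext x
    simp only [mem_cylF_iff, Set.mem_iInter, Set.mem_setOf_eq]
    exact ⟨fun h i => h i i.2, fun h i hi => h ⟨i, hi⟩⟩
  rw [this]
  refine isOpen_iInter_of_finite fun i => ?_
  show IsOpen ((fun x : ℕ → ℕ => x (i : ℕ)) ⁻¹' {t[(i : ℕ)]})
  exact IsOpen.preimage (continuous_apply (i : ℕ)) (isOpen_discrete _)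

lemma cylF_nonempty (t : List ℕ) : (cylF t).Nonempty := by
  refine ⟨fun i => t.getD i 0, ?_⟩
  rw [mem_cylF_iff]
  intro i hi
  simp [List.getD_eq_getElem _ _ hi, List.getElem?_eq_getElem hi]

lemma exists_seg_cylF_subset {W : Set (ℕ → ℕ)} (hW : IsOpen W) {z : ℕ → ℕ} (hz : z ∈ W) :
    ∃ n, cylF (seg z n) ⊆ W := by
  obtain ⟨I, u, hu, hsub⟩ := isOpen_pi_iff.1 hW z hz
  refine ⟨(I.sup id) + 1, fun w hw => hsub ?_⟩
  rw [mem_cylF_iff] at hw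
  intro a ha
  have hal : a < I.sup id + 1 := Nat.lt_succ_of_le (Finset.le_sup (f := id) ha)
  have := hw a (by simpa using hal)
  rw [this, seg_getElem z hal]
  exact (hu a ha).2

/-- extend any node into a dense open set -/
lemma extend_into_dense {W : Set (ℕ → ℕ)} (hW : IsOpen W) (hWd : Dense W) (r : List ℕ) :
    ∃ t : List ℕ, r <+: t ∧ cylF t ⊆ W := by
  obtain ⟨z, hzr, hzW⟩ := hWd.inter_open_nonempty (cylF r) (isOpen_cylF r) (cylF_nonempty r)
  obtain ⟨n, hn⟩ := exists_seg_cylF_subset hW hzW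
  refine ⟨seg z (max n r.length), ?_, ?_⟩
  · have h := seg_prefix z (le_max_right n r.length)
    rwa [show seg z r.length = r from hzr] at h
  · exact (cylF_anti (seg_prefix z (le_max_left _ _))).trans hn

namespace MillerScheme

variable (base : List ℕ) (F : List ℕ → ℕ → List ℕ)

def buildR : List ℕ → List ℕ
  | [] => base
  | k :: r => F (buildR r) k

def build (c : List ℕ) : List ℕ := buildR base F c.reverse

@[simp] lemma build_nil : build base F [] = base := rfl

@[simp] lemma build_snoc (c : List ℕ) (k : ℕ) :
    build base F (c ++ [k]) = F (build base F c) k := by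
  simp [build, buildR]

variable (g : List ℕ → ℕ → ℕ)

/-- The scheme conditions. -/
def Ok : Prop :=
  (∀ c, Function.Injective (g c)) ∧
  (∀ c k, build base F c ++ [g c k] <+: build base F (c ++ [k]))

variable {base F g}

lemma build_mono (hOk : Ok base F g) : ∀ {c c' : List ℕ}, c <+: c' →
    build base F c <+: build base F c' := by
  intro c c' h
  obtain ⟨r, rfl⟩ := h
  induction r using List.reverseRecOn with
  | nil => simp
  | append_singleton r k ih =>
    rw [← List.append_assoc]
    refine ih.trans ?_
    exact (List.prefix_append _ _).trans (hOk.2 (c ++ r) k)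

lemma length_le_build (hOk : Ok base F g) : ∀ c : List ℕ, c.length ≤ (build base F c).length := by
  intro c
  induction c using List.reverseRecOn with
  | nil => simp
  | append_singleton c k ih =>
    have h := (hOk.2 c k).length_le
    simp only [List.length_append, List.length_singleton] at h ⊢
    omega

/-- The downward closure of the image of `S` under `build`. -/
def cl (S : Set (List ℕ)) : Set (List ℕ) := {t | ∃ c ∈ S, t <+: build base F c}

variable (base F) in
lemma cl_tree (S : Set (List ℕ)) : IsTreeN (cl (base := base) (F := F) S) := by
  rintro t ⟨c, hc, ht⟩ k
  exact ⟨c, hc, (List.take_prefix _ _).trans ht⟩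

variable (base F) in
lemma cl_subset {T : Set (List ℕ)} (hT : IsTreeN T) (hb : ∀ c, build base F c ∈ T)
    (S : Set (List ℕ)) : cl (base := base) (F := F) S ⊆ T := by
  rintro t ⟨c, _, ht⟩
  rw [List.prefix_iff_eq_take.1 ht]
  exact hT _ (hb c) _

/-- comparability transfer -/
lemma comp_of_both_prefix {l₁ l₂ l₃ : List ℕ} (h1 : l₁ <+: l₃) (h2 : l₂ <+: l₃) :
    l₁ <+: l₂ ∨ l₂ <+: l₁ := by
  rcases Nat.le_total l₁.length l₂.length with h | h
  · exact Or.inl (List.prefix_of_prefix_length_le h1 h2 h)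
  · exact Or.inr (List.prefix_of_prefix_length_le h2 h1 h)

lemma getElem_eq_of_comp {l₁ l₂ : List ℕ} (h : l₁ <+: l₂ ∨ l₂ <+: l₁) {i : ℕ}
    (h1 : i < l₁.length) (h2 : i < l₂.length) : l₁[i] = l₂[i] := by
  rcases h with h | h
  · exact h.getElem h1
  · exact (h.getElem h2).symm

lemma snoc_prefix_of_lt {c s : List ℕ} (h : c <+: s) (hl : c.length < s.length) :
    c ++ [s[c.length]] <+: s := by
  obtain ⟨r, rfl⟩ := h
  have hr : r ≠ [] := by rintro rfl; simp at hl
  obtain ⟨a, r', rfl⟩ := List.exists_cons_of_ne_nil hr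
  have : (c ++ a :: r')[c.length]'(by simp) = a := by
    rw [List.getElem_append_right (le_refl _)]
    simp
  rw [this]
  exact ⟨r', by simp⟩

theorem compat (hOk : Ok base F g) : ∀ N a b, a.length + b.length ≤ N →
    (build base F a <+: build base F b ∨ build base F b <+: build base F a) →
    (a <+: b ∨ b <+: a) := by
  intro N
  induction N with
  | zero =>
    intro a b hab _
    have : a = [] := by
      cases a with | nil => rfl | cons x l => simp at hab
    exact Or.inl (this ▸ List.nil_prefix)
  | succ N IH =>
    intro a b hab hcomp
    rcases List.eq_nil_or_concat a with rfl | ⟨a', m, rfl⟩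
    · exact Or.inl List.nil_prefix
    rcases List.eq_nil_or_concat b with rfl | ⟨b', m', rfl⟩
    · exact Or.inr List.nil_prefix
    simp only [List.concat_eq_append] at hab hcomp ⊢
    simp only [List.length_append, List.length_singleton] at hab
    have hba' : build base F a' <+: build base F (a' ++ [m]) := build_mono hOk ⟨[m], rfl⟩
    have hbb' : build base F b' <+: build base F (b' ++ [m']) := build_mono hOk ⟨[m'], rfl⟩
    have h1 : build base F a' <+: build base F (b' ++ [m']) ∨
        build base F (b' ++ [m']) <+: build base F a' := by
      rcases hcomp with h | h
      · exact Or.inl (hba'.trans h)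
      · exact comp_of_both_prefix hba' h
    have hlen1 : a'.length + (b' ++ [m']).length ≤ N := by
      simp only [List.length_append, List.length_singleton]; omega
    rcases IH a' (b' ++ [m']) hlen1 h1 with h | h
    · -- a' <+: b
      have hle : a'.length ≤ b'.length + 1 := by simpa using h.length_le
      rcases Nat.lt_or_ge a'.length (b'.length + 1) with hlt | hge
      · -- a'.length ≤ b'.length, so a' <+: b'
        have ha'b' : a' <+: b' := List.prefix_of_prefix_length_le h (List.prefix_append _ _)
          (by omega)
        rcases Nat.lt_or_ge a'.length b'.length with hlt2 | hge2
        · -- a' strictly shorter than b' : recurse on (a, b')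
          have h2 : build base F (a' ++ [m]) <+: build base F b' ∨
              build base F b' <+: build base F (a' ++ [m]) := by
            rcases hcomp with hc | hc
            · exact comp_of_both_prefix hc hbb'
            · exact Or.inr (hbb'.trans hc)
          have hlen2 : (a' ++ [m]).length + b'.length ≤ N := by
            simp only [List.length_append, List.length_singleton]; omega
          rcases IH (a' ++ [m]) b' hlen2 h2 with h3 | h3
          · exact Or.inl (h3.trans ⟨[m'], rfl⟩)
          · have hl3 : b'.length = a'.length + 1 := by
              have := h3.length_le
              simp only [List.length_append, List.length_singleton] at this
              omega
            have hb'a : b' = a' ++ [m] := h3.eq_of_length (by simp [hl3])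
            exact Or.inl (hb'a ▸ ⟨[m'], rfl⟩)
        · -- a' = b'
          have ha'b : a' = b' := ha'b'.eq_of_length (by omega)
          subst ha'b
          have pa := hOk.2 a' m
          have pb := hOk.2 a' m'
          have e1 := pa.getElem (i := (build base F a').length) (by simp)
          have e2 := pb.getElem (i := (build base F a').length) (by simp)
          simp only [List.getElem_concat_length] at e1 e2
          have hgg : g a' m = g a' m' := by
            rw [e1, e2]
            exact getElem_eq_of_comp hcomp _ _
          have : m = m' := hOk.1 a' hgg
          subst this
          exact Or.inl (List.prefix_refl _)
      · -- a' = b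
        have : a' = b' ++ [m'] := h.eq_of_length (by simp; omega)
        exact Or.inr (this ▸ ⟨[m], rfl⟩)
    · exact Or.inr (h.trans ⟨[m], rfl⟩)

/-- helper for the splitting-origin lemma -/
lemma split_origin_aux (hOk : Ok base F g) {a' b u : List ℕ} {m₀ k l : ℕ}
    (hkl : k ≠ l) (ha : u ++ [k] <+: build base F (a' ++ [m₀]))
    (hb : u ++ [l] <+: build base F b)
    (ha' : build base F a' <+: u) (hab : a' <+: b) :
    ∃ j, m₀ ≠ j ∧ a' ++ [j] <+: b ∧ u = build base F a' := by
  have hu_a : u <+: build base F (a' ++ [m₀]) := (List.prefix_append u [k]).trans ha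
  have hu_b : u <+: build base F b := (List.prefix_append u [l]).trans hb
  -- a' ≠ b, so a' is a strict prefix of b
  have hlt : a'.length < b.length := by
    rcases Nat.lt_or_ge a'.length b.length with h | h
    · exact h
    · exfalso
      have : a' = b := hab.eq_of_length (le_antisymm hab.length_le h)
      subst this
      have h1 : (build base F a').length ≤ u.length := ha'.length_le
      have h2 : u.length + 1 ≤ (build base F a').length := by
        simpa using hb.length_le
      omega
  set j := b[a'.length] with hj
  have hjb : a' ++ [j] <+: b := snoc_prefix_of_lt hab hlt
  -- positions
  have pa := hOk.2 a' m₀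
  have pj : build base F a' ++ [g a' j] <+: build base F b :=
    (hOk.2 a' j).trans (build_mono hOk hjb)
  -- if m₀ = j then a = a' ++ [m₀] <+: b, contradiction with k ≠ l
  have hmj : m₀ ≠ j := by
    intro hmm
    have hpref : a' ++ [m₀] <+: b := hmm ▸ hjb
    have hbuild : build base F (a' ++ [m₀]) <+: build base F b := build_mono hOk hpref
    have hk' : u ++ [k] <+: build base F b := ha.trans hbuild
    have hlen : u.length < (u ++ [k]).length := by simp
    have e1 := hk'.getElem (i := u.length) (by simp)
    have e2 := hb.getElem (i := u.length) (by simp)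
    simp only [List.getElem_concat_length] at e1 e2
    exact hkl (e1.trans e2.symm)
  refine ⟨j, hmj, hjb, ?_⟩
  -- u = build a' : show lengths are equal
  have hle : (build base F a').length ≤ u.length := ha'.length_le
  rcases Nat.lt_or_ge (build base F a').length u.length with hlt2 | hge2
  · exfalso
    -- index i := |build a'| < |u|: build a and build b agree there, giving g a' m₀ = g a' j
    set i := (build base F a').length with hi
    have e1 := pa.getElem (i := i) (by simp [hi])
    have e2 := pj.getElem (i := i) (by simp [hi])
    simp only [List.getElem_concat_length hi] at e1 e2
    have eu1 := hu_a.getElem (i := i) hlt2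
    have eu2 := hu_b.getElem (i := i) hlt2
    have : g a' m₀ = g a' j := by rw [e1, e2, ← eu1, ← eu2]
    exact hmj (hOk.1 a' this)
  · exact (ha'.eq_of_length (le_antisymm hle hge2)).symm

/-- a node with two distinct immediate extensions toward `build`-images is a `build`-image
of a node with two distinct immediate extensions. -/
lemma split_origin (hOk : Ok base F g) : ∀ N (a b u : List ℕ) (k l : ℕ), a.length + b.length ≤ N →
    k ≠ l → u ++ [k] <+: build base F a → u ++ [l] <+: build base F b →
    ∃ c m m', m ≠ m' ∧ c ++ [m] <+: a ∧ c ++ [m'] <+: b ∧ u = build base F c := by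
  intro N
  induction N with
  | zero =>
    intro a b u k l hab hkl ha hb
    exfalso
    have ha0 : a = [] := by cases a with | nil => rfl | cons x t => simp at hab
    have hb0 : b = [] := by cases b with | nil => rfl | cons x t => simp at hab
    subst ha0; subst hb0
    have e1 := ha.getElem (i := u.length) (by simp)
    have e2 := hb.getElem (i := u.length) (by simp)
    simp only [List.getElem_concat_length] at e1 e2
    exact hkl (e1.trans e2.symm)
  | succ N IH =>
    intro a b u k l hab hkl ha hb
    rcases List.eq_nil_or_concat a with rfl | ⟨a', m₀, rfl⟩
    · -- a = [] : base extends u++[k]; and base <+: build b, so k = l, contradiction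
      exfalso
      have hbase : build base F ([] : List ℕ) <+: build base F b := build_mono hOk List.nil_prefix
      have hk' : u ++ [k] <+: build base F b := ha.trans hbase
      have e1 := hk'.getElem (i := u.length) (by simp)
      have e2 := hb.getElem (i := u.length) (by simp)
      simp only [List.getElem_concat_length] at e1 e2
      exact hkl (e1.trans e2.symm)
    rcases List.eq_nil_or_concat b with rfl | ⟨b', m₀', rfl⟩
    · exfalso
      have hbase : build base F ([] : List ℕ) <+: build base F (a'.concat m₀) :=
        build_mono hOk List.nil_prefix
      have hl' : u ++ [l] <+: build base F (a'.concat m₀) := hb.trans hbase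
      have e1 := ha.getElem (i := u.length) (by simp)
      have e2 := hl'.getElem (i := u.length) (by simp)
      simp only [List.getElem_concat_length] at e1 e2
      exact hkl (e1.trans e2.symm)
    simp only [List.concat_eq_append] at hab ha hb ⊢
    simp only [List.length_append, List.length_singleton] at hab
    have hba' : build base F a' <+: build base F (a' ++ [m₀]) := build_mono hOk ⟨[m₀], rfl⟩
    have hbb' : build base F b' <+: build base F (b' ++ [m₀']) := build_mono hOk ⟨[m₀'], rfl⟩
    rcases Nat.lt_or_ge u.length (build base F a').length with hca | hca
    · -- u ++ [k] <+: build a'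
      have ha2 : u ++ [k] <+: build base F a' :=
        List.prefix_of_prefix_length_le ha hba' (by simpa using hca)
      obtain ⟨c, m, m', hmm, h1, h2, h3⟩ := IH a' (b' ++ [m₀']) u k l
        (by simp only [List.length_append, List.length_singleton]; omega) hkl ha2 hb
      exact ⟨c, m, m', hmm, h1.trans ⟨[m₀], rfl⟩, h2, h3⟩
    rcases Nat.lt_or_ge u.length (build base F b').length with hcb | hcb
    · have hb2 : u ++ [l] <+: build base F b' :=
        List.prefix_of_prefix_length_le hb hbb' (by simpa using hcb)
      obtain ⟨c, m, m', hmm, h1, h2, h3⟩ := IH (a' ++ [m₀]) b' u k l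
        (by simp only [List.length_append, List.length_singleton]; omega) hkl ha hb2
      exact ⟨c, m, m', hmm, h1, h2.trans ⟨[m₀'], rfl⟩, h3⟩
    -- both build a' and build b' are prefixes of u
    have hua : u <+: build base F (a' ++ [m₀]) := (List.prefix_append u [k]).trans ha
    have hub : u <+: build base F (b' ++ [m₀']) := (List.prefix_append u [l]).trans hb
    have ha'u : build base F a' <+: u := List.prefix_of_prefix_length_le hba' hua hca
    have hb'u : build base F b' <+: u := List.prefix_of_prefix_length_le hbb' hub hcb
    rcases compat hOk (a'.length + b'.length) a' b' le_rfl
        (comp_of_both_prefix ha'u hb'u) with hab' | hab'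
    · obtain ⟨j, hmj, hjb, hu⟩ :=
        split_origin_aux hOk hkl ha hb ha'u (hab'.trans ⟨[m₀'], rfl⟩)
      exact ⟨a', m₀, j, hmj, List.prefix_refl _, hjb, hu⟩
    · obtain ⟨j, hmj, hjb, hu⟩ :=
        split_origin_aux hOk hkl.symm hb ha hb'u (hab'.trans ⟨[m₀], rfl⟩)
      exact ⟨b', j, m₀', hmj.symm, hjb, List.prefix_refl _, hu⟩


lemma cl_miller (hOk : Ok base F g) {S : Set (List ℕ)} (hS : IsMiller S) :
    IsMiller (cl (base := base) (F := F) S) := by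
  refine ⟨cl_tree base F S, ?_, ?_, ?_⟩
  · obtain ⟨c, hc⟩ := hS.2.1
    exact ⟨[], c, hc, List.nil_prefix⟩
  · rintro t ⟨c, hc, ht⟩
    obtain ⟨c', hcc', hsplit⟩ := hS.2.2.1 c hc
    refine ⟨build base F c', ht.trans (build_mono hOk hcc'), ?_, ?_⟩
    · exact ⟨c', hsplit.1, List.prefix_refl _⟩
    · obtain ⟨k, l, hkl, hk, hl⟩ := hsplit.2
      exact ⟨g c' k, g c' l, fun h => hkl (hOk.1 c' h),
        ⟨c' ++ [k], hk, hOk.2 c' k⟩, ⟨c' ++ [l], hl, hOk.2 c' l⟩⟩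
  · rintro u ⟨hu, k, l, hkl, ⟨a, haS, hka⟩, ⟨b, hbS, hlb⟩⟩
    obtain ⟨c, m, m', hmm, hma, hmb, rfl⟩ :=
      split_origin hOk (a.length + b.length) a b u k l le_rfl hkl hka hlb
    have hcS : c ∈ S := by
      have h := hS.1 a haS c.length
      rwa [← List.prefix_iff_eq_take.1 ((List.prefix_append c [m]).trans hma)] at h
    have hcmS : c ++ [m] ∈ S := by
      have h := hS.1 a haS (c ++ [m]).length
      rwa [← List.prefix_iff_eq_take.1 hma] at h
    have hcm'S : c ++ [m'] ∈ S := by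
      have h := hS.1 b hbS (c ++ [m']).length
      rwa [← List.prefix_iff_eq_take.1 hmb] at h
    have hsplit : SplitNodeN S c := ⟨hcS, m, m', hmm, hcmS, hcm'S⟩
    have hinf := hS.2.2.2 c hsplit
    refine ((hinf.image ((hOk.1 c).injOn)).mono ?_)
    rintro _ ⟨q, hq, rfl⟩
    exact ⟨c ++ [q], hq, hOk.2 c q⟩

lemma cl_branch (hOk : Ok base F g) {S : Set (List ℕ)} (hS : IsTreeN S) {y : ℕ → ℕ}
    (hy : y ∈ bodyN (cl (base := base) (F := F) S)) :
    ∃ x ∈ bodyN S, ∀ m : ℕ,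
      build base F (seg x m) = seg y (build base F (seg x m)).length := by
  have hy' : ∀ n, seg y n ∈ cl (base := base) (F := F) S := hy
  set P : List ℕ → Prop :=
    fun c => c ∈ S ∧ ∀ n, ∃ s ∈ S, c <+: s ∧ seg y n <+: build base F s with hPdef
  have hmemS : ∀ {c s : List ℕ}, s ∈ S → c <+: s → c ∈ S := by
    intro c s hs hcs
    have h := hS s hs c.length
    rwa [← List.prefix_iff_eq_take.1 hcs] at h
  have hP0 : P [] := by
    constructor
    · obtain ⟨c, hc, -⟩ := hy' 0
      exact hmemS hc List.nil_prefix
    · intro n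
      obtain ⟨s, hs, hpre⟩ := hy' n
      exact ⟨s, hs, List.nil_prefix, hpre⟩
  have hstepP : ∀ c, P c → ∃ k, P (c ++ [k]) := by
    rintro c ⟨hcS, hc⟩
    set i := (build base F c).length with hi
    -- key : if c ++ [k'] sits under s which follows y for at least i+1 steps, then
    -- g c k' is the value y i.
    have key : ∀ s n' k', seg y n' <+: build base F s → i + 1 ≤ n' →
        c ++ [k'] <+: s → g c k' = y i := by
      intro s n' k' hys hn' hck
      have hpre : build base F c ++ [g c k'] <+: build base F s :=
        (hOk.2 c k').trans (build_mono hOk hck)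
      have e1 := hpre.getElem (i := i) (by simp [hi])
      simp only [List.getElem_concat_length hi] at e1
      have hn'' : i < (seg y n').length := by simp; omega
      have e2 := hys.getElem (i := i) hn''
      rw [seg_getElem y (by omega : i < n')] at e2
      exact e1.trans e2.symm
    have exists_snoc : ∀ s n', c <+: s → seg y n' <+: build base F s → i + 1 ≤ n' →
        ∃ k', c ++ [k'] <+: s := by
      intro s n' hcs hys hn'
      have hslen : i + 1 ≤ (build base F s).length := by
        have := hys.length_le
        simp only [seg_length] at this
        omega
      have hclt : c.length < s.length := by
        rcases Nat.lt_or_ge c.length s.length with h | h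
        · exact h
        · exfalso
          have : c = s := hcs.eq_of_length (le_antisymm hcs.length_le h)
          subst this
          omega
      exact ⟨s[c.length], snoc_prefix_of_lt hcs hclt⟩
    obtain ⟨s₀, hs₀S, hcs₀, hys₀⟩ := hc (i + 1)
    obtain ⟨k, hck⟩ := exists_snoc s₀ (i + 1) hcs₀ hys₀ le_rfl
    refine ⟨k, hmemS hs₀S hck, ?_⟩
    intro n
    obtain ⟨s, hsS, hcs, hys⟩ := hc (max n (i + 1))
    obtain ⟨k', hck'⟩ := exists_snoc s _ hcs hys (le_max_right _ _)
    have : g c k = g c k' := by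
      rw [key s₀ (i+1) k hys₀ le_rfl hck, key s _ k' hys (le_max_right _ _) hck']
    have hkk : k = k' := hOk.1 c this
    subst hkk
    exact ⟨s, hsS, hck', (seg_prefix y (le_max_left _ _)).trans hys⟩
  -- iterate the step function
  let next : {c : List ℕ // P c} → {c : List ℕ // P c} :=
    fun p => ⟨p.1 ++ [Classical.choose (hstepP p.1 p.2)],
      Classical.choose_spec (hstepP p.1 p.2)⟩
  let d : ℕ → {c : List ℕ // P c} := fun n => next^[n] ⟨[], hP0⟩
  have hdsucc : ∀ n, d (n + 1) = next (d n) := fun n => Function.iterate_succ_apply' next n _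
  have hlen : ∀ n, (d n).1.length = n := by
    intro n
    induction n with
    | zero => rfl
    | succ n ih => rw [hdsucc n]; simp [next, ih]
  let x : ℕ → ℕ := fun idx => (d (idx + 1)).1.getD idx 0
  have hseg : ∀ n, seg x n = (d n).1 := by
    intro n
    induction n with
    | zero => simp [seg, d]
    | succ n ih =>
      rw [seg_snoc, ih, hdsucc n]
      show (d n).1 ++ [x n] = (d n).1 ++ [_]
      congr 1
      show [(d (n + 1)).1.getD n 0] = _
      rw [hdsucc n]
      show [((d n).1 ++ [_]).getD n 0] = _
      congr 1
      rw [List.getD_eq_getElem _ _ (by simp [hlen n])]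
      have := List.getElem_concat_length (l := (d n).1)
        (a := Classical.choose (hstepP (d n).1 (d n).2)) (i := n) (hlen n).symm (by simp [hlen n])
      simpa using this
  refine ⟨x, ?_, ?_⟩
  · intro n
    show seg x n ∈ S
    rw [hseg n]
    exact (d n).2.1
  intro m
  rw [hseg m]
  obtain ⟨s, hsS, hcs, hys⟩ := (d m).2.2 (build base F (d m).1).length
  have h1 : build base F (d m).1 <+: build base F s := build_mono hOk hcs
  have h2 : build base F (d m).1 <+: seg y (build base F (d m).1).length :=
    List.prefix_of_prefix_length_le h1 hys (by simp)
  exact h2.eq_of_length (by simp)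

end MillerScheme

open MillerScheme

/-! ### The scheme attached to a Miller tree -/

open Classical in
noncomputable def splitOf (T : Set (List ℕ)) (t : List ℕ) : List ℕ :=
  if h : ∃ s, t <+: s ∧ SplitNodeN T s then h.choose else t

lemma splitOf_spec {T : Set (List ℕ)} (hT : IsMiller T) {t : List ℕ} (ht : t ∈ T) :
    t <+: splitOf T t ∧ SplitNodeN T (splitOf T t) := by
  have h : ∃ s, t <+: s ∧ SplitNodeN T s := hT.2.2.1 t ht
  classical
  rw [splitOf]
  rw [dif_pos h]
  exact h.choose_spec

open Classical in
noncomputable def enumOf (T : Set (List ℕ)) (u : List ℕ) (k : ℕ) : ℕ :=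
  if h : (succs T u).Infinite then (Set.Infinite.natEmbedding (succs T u) h k).val else k

lemma enumOf_mem {T : Set (List ℕ)} {u : List ℕ} (h : (succs T u).Infinite) (k : ℕ) :
    enumOf T u k ∈ succs T u := by
  classical
  rw [enumOf]
  rw [dif_pos h]
  exact (Set.Infinite.natEmbedding (succs T u) h k).2

lemma enumOf_inj (T : Set (List ℕ)) (u : List ℕ) : Function.Injective (enumOf T u) := by
  intro k l hkl
  classical
  rw [enumOf, enumOf] at hkl
  split_ifs at hkl with h
  · exact (Set.Infinite.natEmbedding (succs T u) h).injective (Subtype.val_injective hkl)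
  · exact hkl

noncomputable def mBase (T : Set (List ℕ)) : List ℕ := splitOf T []

noncomputable def mF (T : Set (List ℕ)) : List ℕ → ℕ → List ℕ :=
  fun u k => splitOf T (u ++ [enumOf T u k])

noncomputable def mg (T : Set (List ℕ)) : List ℕ → ℕ → ℕ :=
  fun c k => enumOf T (build (mBase T) (mF T) c) k

lemma nil_mem_of_miller {T : Set (List ℕ)} (hT : IsMiller T) : [] ∈ T := by
  obtain ⟨t, ht⟩ := hT.2.1
  simpa using hT.1 t ht 0

lemma mInv {T : Set (List ℕ)} (hT : IsMiller T) (c : List ℕ) :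
    SplitNodeN T (build (mBase T) (mF T) c) := by
  induction c using List.reverseRecOn with
  | nil => exact (splitOf_spec hT (nil_mem_of_miller hT)).2
  | append_singleton c k ih =>
    rw [build_snoc]
    have hinf : (succs T (build (mBase T) (mF T) c)).Infinite := hT.2.2.2 _ ih
    have hmem : build (mBase T) (mF T) c ++ [enumOf T (build (mBase T) (mF T) c) k] ∈ T :=
      enumOf_mem hinf k
    exact (splitOf_spec hT hmem).2

lemma mOk {T : Set (List ℕ)} (hT : IsMiller T) : Ok (mBase T) (mF T) (mg T) := by
  constructor
  · exact fun c => enumOf_inj T _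
  · intro c k
    rw [build_snoc]
    have hinf : (succs T (build (mBase T) (mF T) c)).Infinite := hT.2.2.2 _ (mInv hT c)
    exact (splitOf_spec hT (enumOf_mem hinf k)).1

lemma mBuild_mem {T : Set (List ℕ)} (hT : IsMiller T) (c : List ℕ) :
    build (mBase T) (mF T) c ∈ T := (mInv hT c).1

/-! ### The full tree is Miller -/

lemma isMiller_univ : IsMiller (Set.univ : Set (List ℕ)) := by
  refine ⟨fun _ _ _ => Set.mem_univ _, ⟨[], Set.mem_univ _⟩,
    fun t _ => ⟨t, List.prefix_refl _, Set.mem_univ _, 0, 1, by simp,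
      Set.mem_univ _, Set.mem_univ _⟩,
    fun t _ => ?_⟩
  have : succs Set.univ t = Set.univ := Set.eq_univ_of_forall fun k => Set.mem_univ _
  rw [this]
  exact Set.infinite_univ

/-! ### Residual sets contain superperfect sets above any node -/

lemma residual_seq {C : Set (ℕ → ℕ)} (hC : C ∈ residual (ℕ → ℕ)) :
    ∃ U : ℕ → Set (ℕ → ℕ), (∀ n, IsOpen (U n)) ∧ (∀ n, Dense (U n)) ∧ (⋂ n, U n) ⊆ C := by
  obtain ⟨S₀, hopen, hdense, hcount, hsub⟩ := mem_residual_iff.1 hC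
  rcases S₀.eq_empty_or_nonempty with rfl | hne
  · exact ⟨fun _ => Set.univ, fun _ => isOpen_univ, fun _ => dense_univ,
      by simpa using hsub⟩
  · obtain ⟨f, rfl⟩ := hcount.exists_eq_range hne
    exact ⟨f, fun n => hopen _ ⟨n, rfl⟩, fun n => hdense _ ⟨n, rfl⟩,
      by rwa [← Set.sInter_range]⟩

lemma comeager_miller {C : Set (ℕ → ℕ)} (hC : C ∈ residual (ℕ → ℕ)) (s : List ℕ) :
    ∃ S : Set (List ℕ), IsMiller S ∧ bodyN S ⊆ C ∩ cylF s := by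
  obtain ⟨U, hUo, hUd, hUsub⟩ := residual_seq hC
  -- the decreasing finite intersections
  set V : ℕ → Set (ℕ → ℕ) := fun n => Nat.rec (U 0) (fun n ih => ih ∩ U (n + 1)) n with hV
  have hVo : ∀ n, IsOpen (V n) := by
    intro n
    induction n with
    | zero => exact hUo 0
    | succ n ih => exact ih.inter (hUo (n + 1))
  have hVd : ∀ n, Dense (V n) := by
    intro n
    induction n with
    | zero => exact hUd 0
    | succ n ih => exact ih.inter_of_isOpen_left (hUd (n + 1)) (hVo n)
  have hVU : ∀ n, V n ⊆ U n := by
    intro n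
    cases n with
    | zero => exact le_refl _
    | succ n => exact Set.inter_subset_right
  have hVanti : ∀ {m n : ℕ}, m ≤ n → V n ⊆ V m := by
    intro m n h
    induction n with
    | zero => rw [Nat.le_zero.1 h]
    | succ n ih =>
      rcases Nat.lt_or_ge m (n + 1) with h' | h'
      · exact Set.inter_subset_left.trans (ih (by omega))
      · rw [le_antisymm h h']
  -- scheme via choice
  set base : List ℕ := (extend_into_dense (hVo 0) (hVd 0) s).choose with hbase
  obtain ⟨hbase1, hbase2⟩ := (extend_into_dense (hVo 0) (hVd 0) s).choose_spec
  set F : List ℕ → ℕ → List ℕ :=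
    fun u k => (extend_into_dense (hVo (u.length + 1)) (hVd (u.length + 1)) (u ++ [k])).choose with hF
  have hFspec : ∀ u k, u ++ [k] <+: F u k ∧ cylF (F u k) ⊆ V (u.length + 1) :=
    fun u k => (extend_into_dense (hVo (u.length + 1)) (hVd (u.length + 1)) (u ++ [k])).choose_spec
  have hOk : Ok base F (fun _ k => k) := by
    refine ⟨fun c => fun k l h => h, fun c k => ?_⟩
    rw [build_snoc]
    exact (hFspec _ k).1
  -- the invariant
  have hInvar : ∀ c : List ℕ, cylF (build base F c) ⊆ V c.length := by
    intro c
    induction c using List.reverseRecOn with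
    | nil => exact hbase2
    | append_singleton c k ih =>
      rw [build_snoc]
      refine Set.Subset.trans ((hFspec _ k).2)
        (hVanti (m := (c ++ [k]).length) (n := (build base F c).length + 1) ?_)
      have := length_le_build hOk c
      simp only [List.length_append, List.length_singleton]
      omega
  refine ⟨cl (base := base) (F := F) Set.univ, cl_miller hOk isMiller_univ, ?_⟩
  intro y hy
  obtain ⟨x, -, halong⟩ := cl_branch hOk (fun _ _ _ => Set.mem_univ _) hy
  have hmem : ∀ m : ℕ, y ∈ cylF (build base F (seg x m)) := by
    intro m
    rw [halong m]
    exact mem_cylF_seg y _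
  constructor
  · apply hUsub
    refine Set.mem_iInter.2 fun n => ?_
    have := hInvar (seg x n) (hmem n)
    rw [seg_length] at this
    exact hVU n this
  · have h0 : seg x 0 = [] := by simp [seg]
    have := hmem 0
    rw [h0, build_nil] at this
    exact cylF_anti hbase1 this

/-- If every set in a topologically reasonable family `Θ` of subsets of Baire space
has the Baire property, then every set in `Θ` is Miller measurable. -/
theorem baireProp_implies_millerMeasurable (Θ : Set (Set (ℕ → ℕ)))
    (hΘ : TopReasonableN Θ) (hBP : ∀ X ∈ Θ, HasBairePropN X) :
    ∀ X ∈ Θ, MillerMeasurable X := by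
  intro X hX T hT
  set base := mBase T with hbase
  set F := mF T with hFdef
  have hOk := mOk hT
  -- the continuous map realizing branches of the scheme
  set f : (ℕ → ℕ) → (ℕ → ℕ) := fun x i => (build base F (seg x (i + 1))).getD i 0 with hf
  have hfc : Continuous f := by
    apply continuous_pi
    intro i
    have heq : (fun x => f x i) =
        (fun v : Fin (i + 1) → ℕ => (build base F (List.ofFn v)).getD i 0) ∘
          (fun (x : ℕ → ℕ) (j : Fin (i + 1)) => x (j : ℕ)) := rfl
    rw [heq]
    exact continuous_of_discreteTopology.comp (continuous_pi fun j => continuous_apply _)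
  have hbranch : ∀ S : Set (List ℕ), IsTreeN S →
      ∀ y ∈ bodyN (cl (base := base) (F := F) S), ∃ x ∈ bodyN S, f x = y := by
    intro S hS y hy
    obtain ⟨x, hx, halong⟩ := cl_branch hOk hS hy
    refine ⟨x, hx, ?_⟩
    funext i
    show (build base F (seg x (i + 1))).getD i 0 = y i
    have hlen : i + 1 ≤ (build base F (seg x (i + 1))).length := by
      have h := length_le_build hOk (seg x (i + 1))
      rwa [seg_length] at h
    have h := halong (i + 1)
    rw [h, List.getD_eq_getElem _ _ (by simpa using by omega : i < (seg y
      (build base F (seg x (i + 1))).length).length)]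
    exact seg_getElem y (by omega)
  set Y := f ⁻¹' X with hYdef
  have hYΘ : Y ∈ Θ := hΘ.1 X hX f hfc
  obtain ⟨U, hUo, hUm⟩ := hBP Y hYΘ
  rcases U.eq_empty_or_nonempty with rfl | ⟨z, hz⟩
  · -- Y is meager : find a Miller subtree missing X
    have hYm : IsMeagre Y := by
      have h : symmDiff Y ∅ = Y := by simp
      rwa [h] at hUm
    obtain ⟨S, hSM, hSsub⟩ := comeager_miller (C := Yᶜ) hYm []
    refine ⟨cl (base := base) (F := F) S, cl_miller hOk hSM,
      cl_subset base F hT.1 (mBuild_mem hT) S, Or.inr ?_⟩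
    apply Set.eq_empty_iff_forall_notMem.2
    rintro y ⟨hyb, hyX⟩
    obtain ⟨x, hxS, rfl⟩ := hbranch S hSM.1 y hyb
    exact (hSsub hxS).1 hyX
  · -- Y is comeager in a basic open set
    obtain ⟨n, hn⟩ := exists_seg_cylF_subset hUo hz
    set s := seg z n with hs
    have hmeag : IsMeagre (cylF s ∩ Yᶜ) := by
      refine hUm.mono ?_
      intro w hw
      rw [Set.symmDiff_def]
      exact Set.mem_union_right _ ⟨hn hw.1, hw.2⟩
    obtain ⟨S, hSM, hSsub⟩ := comeager_miller (C := (cylF s ∩ Yᶜ)ᶜ) hmeag s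
    refine ⟨cl (base := base) (F := F) S, cl_miller hOk hSM,
      cl_subset base F hT.1 (mBuild_mem hT) S, Or.inl ?_⟩
    intro y hyb
    obtain ⟨x, hxS, rfl⟩ := hbranch S hSM.1 y hyb
    have hmem := hSsub hxS
    have hxY : x ∈ Y := by
      by_contra h
      exact hmem.1 ⟨hmem.2, h⟩
    exact hxY
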